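/- Let G be a finitely generated group with an abelian normal subgroup M such that Q = G/M is a finitely generated free abelian group, and let π : G → Q be the quotient map. Suppose N is a subgroup of M that is normal in G and satisfies: (uniformity) any two nontrivial subgroups of N that are normal in G have nontrivial intersection; and (trivial centralizer) every g ∈ G satisfying g n g⁻¹ = n for all n ∈ N belongs to M. Let L ⊆ G be a lift of Q, i.e., a subset such that π restricted to L is a bijection onto Q. Then: (i) L is a non-foldable subset of G; (ii) if moreover N is torsion-free, then for every nontrivial m ∈ N the set L·⟨m⟩ = {l m^k : l ∈ L, k ∈ ℤ} is a non-foldable subset of G. -/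

import Mathlib

open scoped Pointwise

namespace S19

variable {G : Type*} [Group G]

/-- commutator-type map: `cmt u d = u⁻¹ * d⁻¹ * u * d`. -/
def cmt (u d : G) : G := u⁻¹ * d⁻¹ * u * d

section basic

variable {M N : Subgroup G}

lemma commM (hM : ∀ a b : ↥M, a * b = b * a) {a b : G} (ha : a ∈ M) (hb : b ∈ M) :
    a * b = b * a := by
  simpa using congrArg Subtype.val (hM ⟨a, ha⟩ ⟨b, hb⟩)

lemma cmt_mem [hN : N.Normal] {u d : G} (hd : d ∈ N) : cmt u d ∈ N := by
  have h1 : u⁻¹ * d⁻¹ * u ∈ N := by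
    simpa using hN.conj_mem d⁻¹ (inv_mem hd) u⁻¹
  exact mul_mem h1 hd

lemma cmt_one (u : G) : cmt u 1 = 1 := by simp [cmt]

lemma key_identity (t n n' : G) (r i : ℤ) :
    (n⁻¹*t*n)^i * ((n⁻¹*t*n)^r)⁻¹ * (n'⁻¹*t*n')^r * ((n⁻¹*t*n)^i)⁻¹
      = n⁻¹ * (t^i * cmt (t^r) (n'*n⁻¹) * t^(-i)) * n := by
  have hu : ∀ a : ℤ, (n⁻¹*t*n)^a = n⁻¹*t^a*n := by
    intro a
    simpa [MulAut.conj_apply, mul_assoc] using (map_zpow (MulAut.conj n⁻¹) t a).symm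
  have hu' : ∀ a : ℤ, (n'⁻¹*t*n')^a = n'⁻¹*t^a*n' := by
    intro a
    simpa [MulAut.conj_apply, mul_assoc] using (map_zpow (MulAut.conj n'⁻¹) t a).symm
  simp only [hu, hu']
  unfold cmt
  group

end basic

section basic2

variable {M N : Subgroup G}

lemma commN (hM : ∀ a b : ↥M, a * b = b * a) (hNM : N ≤ M) {a b : G}
    (ha : a ∈ N) (hb : b ∈ N) : a * b = b * a :=
  commM hM (hNM ha) (hNM hb)

lemma cmt_mul [hN : N.Normal] (hM : ∀ a b : ↥M, a * b = b * a) (hNM : N ≤ M) (u : G)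
    {d e : G} (hd : d ∈ N) (he : e ∈ N) :
    cmt u (d * e) = cmt u d * cmt u e := by
  have hA : u⁻¹ * d⁻¹ * u ∈ N := by simpa using hN.conj_mem _ (inv_mem hd) u⁻¹
  have hB : u⁻¹ * e⁻¹ * u ∈ N := by simpa using hN.conj_mem _ (inv_mem he) u⁻¹
  have e1 : cmt u (d * e) = ((u⁻¹*e⁻¹*u) * (u⁻¹*d⁻¹*u)) * d * e := by unfold cmt; group
  have e2 : cmt u d * cmt u e = (u⁻¹*d⁻¹*u) * (d * (u⁻¹*e⁻¹*u)) * e := by unfold cmt; group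
  rw [e1, e2, commN hM hNM hB hA, commN hM hNM hd hB]
  simp only [mul_assoc]

lemma cmt_inv [N.Normal] (hM : ∀ a b : ↥M, a * b = b * a) (hNM : N ≤ M) (u : G)
    {d : G} (hd : d ∈ N) : cmt u d⁻¹ = (cmt u d)⁻¹ := by
  have h := cmt_mul hM hNM u hd (inv_mem hd)
  rw [mul_inv_cancel, cmt_one] at h
  exact inv_eq_of_mul_eq_one_right h.symm ▸ (eq_inv_of_mul_eq_one_right h.symm).symm ▸ rfl

lemma cmt_pow [N.Normal] (hM : ∀ a b : ↥M, a * b = b * a) (hNM : N ≤ M) (u : G)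
    {d : G} (hd : d ∈ N) (k : ℕ) : cmt u (d ^ k) = (cmt u d) ^ k := by
  induction k with
  | zero => simp [cmt_one]
  | succ k ih =>
      rw [pow_succ, cmt_mul hM hNM u (pow_mem hd k) hd, ih, pow_succ]

lemma cmt_conj (g u d : G) : g * cmt u d * g⁻¹ = cmt (g*u*g⁻¹) (g*d*g⁻¹) := by
  unfold cmt; group

lemma cmt_mul_M [N.Normal] (hM : ∀ a b : ↥M, a * b = b * a) (hNM : N ≤ M)
    {u μ d : G} (hμ : μ ∈ M) (hd : d ∈ N) : cmt (u * μ) d = cmt u d := by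
  have hA : u⁻¹ * d⁻¹ * u ∈ M := hNM (by simpa using ‹N.Normal›.conj_mem _ (inv_mem hd) u⁻¹)
  have e1 : cmt (u*μ) d = μ⁻¹ * ((u⁻¹*d⁻¹*u) * μ) * d := by unfold cmt; group
  rw [e1, commM hM hA hμ]
  unfold cmt; group

lemma sigma_apply (u n : G) : u⁻¹ * n * u = n * (cmt u n)⁻¹ := by unfold cmt; group

lemma sigma_pow (u n : G) (h2 : cmt u (cmt u n) = 1) (j : ℕ) :
    (u^j)⁻¹ * n * u^j = n * ((cmt u n)⁻¹)^j := by
  have hc : u⁻¹ * (cmt u n) * u = cmt u n := by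
    rw [sigma_apply u (cmt u n), h2]; simp
  induction j with
  | zero => simp
  | succ j ih =>
      have step1 : (u^(j+1))⁻¹ * n * u^(j+1) = u⁻¹ * ((u^j)⁻¹ * n * u^j) * u := by group
      rw [step1, ih]
      have hconj : ∀ (x : G), u⁻¹ * x^j * u = (u⁻¹*x*u)^j := fun x => by
        simpa [MulAut.conj_apply, mul_assoc] using (map_pow (MulAut.conj u⁻¹) x j)
      calc u⁻¹ * (n * ((cmt u n)⁻¹)^j) * u
          = (u⁻¹*n*u) * (u⁻¹ * ((cmt u n)⁻¹)^j * u) := by group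
        _ = (u⁻¹*n*u) * ((u⁻¹ * (cmt u n)⁻¹ * u))^j := by rw [hconj]
        _ = (u⁻¹*n*u) * (((u⁻¹ * (cmt u n) * u))⁻¹)^j := by
              rw [show u⁻¹*(cmt u n)⁻¹*u = (u⁻¹*(cmt u n)*u)⁻¹ by group]
        _ = (u⁻¹*n*u) * ((cmt u n)⁻¹)^j := by rw [hc]
        _ = n * (cmt u n)⁻¹ * ((cmt u n)⁻¹)^j := by rw [sigma_apply]
        _ = n * ((cmt u n)⁻¹)^(j+1) := by rw [pow_succ']; group

end basic2

section quotient_facts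

variable {M : Subgroup G} [M.Normal]

lemma Qcomm (hQ : ∃ d : ℕ, Nonempty ((G ⧸ M) ≃* Multiplicative (Fin d → ℤ))) :
    ∀ a b : G ⧸ M, a * b = b * a := by
  obtain ⟨d, ⟨e⟩⟩ := hQ
  intro a b
  apply e.injective
  rw [map_mul, map_mul, mul_comm]

lemma Qtf (hQ : ∃ d : ℕ, Nonempty ((G ⧸ M) ≃* Multiplicative (Fin d → ℤ)))
    (y : G ⧸ M) (c : ℕ) (hc : c ≠ 0) (hy : y ^ c = 1) : y = 1 := by
  obtain ⟨d, ⟨e⟩⟩ := hQ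
  apply e.injective
  have h1 : (e y) ^ c = 1 := by rw [← map_pow, hy, map_one]
  have h2 : Multiplicative.toAdd (e y) = 0 := by
    have h3 : c • Multiplicative.toAdd (e y) = 0 := by
      have := congrArg Multiplicative.toAdd h1
      simpa using this
    funext i
    have h4 : (c : ℤ) * (Multiplicative.toAdd (e y) i) = 0 := by
      have := congrArg (fun f => f i) h3
      simpa [mul_comm] using this
    rcases mul_eq_zero.1 h4 with h | h
    · exact absurd (by exact_mod_cast h) hc
    · exact h
  rw [map_one]
  have : e y = Multiplicative.ofAdd 0 := by
    rw [← h2]; rfl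
  simpa using this

lemma conj_eq_mul_M (hQ : ∃ d : ℕ, Nonempty ((G ⧸ M) ≃* Multiplicative (Fin d → ℤ)))
    (g t : G) : ∃ μ ∈ M, g * t * g⁻¹ = t * μ := by
  refine ⟨t⁻¹ * (g * t * g⁻¹), ?_, by group⟩
  rw [← QuotientGroup.eq_one_iff]
  have hcm := Qcomm hQ ((g : G ⧸ M)) ((t : G ⧸ M))
  have : ((t⁻¹ * (g * t * g⁻¹) : G) : G ⧸ M)
      = ((t : G ⧸ M))⁻¹ * ((g : G ⧸ M) * (t : G ⧸ M) * ((g : G ⧸ M))⁻¹) := by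
    push_cast
    rfl
  rw [this, hcm]
  group

end quotient_facts

section wab

variable (M N : Subgroup G) [M.Normal] [N.Normal]

lemma conj_pow_eq (g x : G) (d : ℕ) : g * x ^ d * g⁻¹ = (g * x * g⁻¹) ^ d := by
  simpa [MulAut.conj_apply, mul_assoc] using (map_pow (MulAut.conj g) x d)

variable {M}

/-- generating set of the candidate normal subgroup -/
def WABgen (t : G) (d h : ℕ) : Set G :=
  {x | ∃ n ∈ N, ∃ r : ℤ, x = cmt (t ^ r) (n ^ d)} ∪
    {x | ∃ n ∈ N, x = cmt (t ^ (h : ℤ)) (cmt (t ^ (h : ℤ)) n)}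

/-- The candidate normal subgroup attached to `t` and integers `d`, `h`. -/
def WAB (t : G) (d h : ℕ) : Subgroup G :=
  Subgroup.closure (WABgen N t d h)

variable {N}

lemma WAB_le (t : G) (d h : ℕ) : WAB N t d h ≤ N := by
  rw [WAB, Subgroup.closure_le]
  rintro x (⟨n, hn, r, rfl⟩ | ⟨n, hn, rfl⟩)
  · exact cmt_mem (pow_mem hn d)
  · exact cmt_mem (cmt_mem hn)

lemma WAB_normal (hM : ∀ a b : ↥M, a * b = b * a) (hNM : N ≤ M)
    (hQ : ∃ d : ℕ, Nonempty ((G ⧸ M) ≃* Multiplicative (Fin d → ℤ)))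
    (t : G) (d h : ℕ) : (WAB N t d h).Normal := by
  constructor
  intro x hx g
  have hmap : ∀ y ∈ WABgen N t d h, g * y * g⁻¹ ∈ WAB N t d h := by
    rintro y (⟨n, hn, r, rfl⟩ | ⟨n, hn, rfl⟩)
    · obtain ⟨μ, hμ, hμe⟩ := conj_eq_mul_M hQ g (t ^ r)
      have : g * cmt (t ^ r) (n ^ d) * g⁻¹ = cmt (t ^ r) ((g * n * g⁻¹) ^ d) := by
        rw [cmt_conj, conj_pow_eq, hμe,
          cmt_mul_M hM hNM hμ (pow_mem (‹N.Normal›.conj_mem n hn g) d)]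
      rw [this]
      exact Subgroup.subset_closure
        (Or.inl ⟨g * n * g⁻¹, ‹N.Normal›.conj_mem n hn g, r, rfl⟩)
    · obtain ⟨μ, hμ, hμe⟩ := conj_eq_mul_M hQ g (t ^ (h : ℤ))
      have hinner : g * cmt (t ^ (h : ℤ)) n * g⁻¹ = cmt (t ^ (h : ℤ)) (g * n * g⁻¹) := by
        rw [cmt_conj, hμe, cmt_mul_M hM hNM hμ (‹N.Normal›.conj_mem n hn g)]
      have : g * cmt (t ^ (h : ℤ)) (cmt (t ^ (h : ℤ)) n) * g⁻¹
          = cmt (t ^ (h : ℤ)) (cmt (t ^ (h : ℤ)) (g * n * g⁻¹)) := by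
        rw [cmt_conj, hμe, cmt_mul_M hM hNM hμ
          (‹N.Normal›.conj_mem _ (cmt_mem hn) g), hinner]
      rw [this]
      exact Subgroup.subset_closure (Or.inr ⟨g * n * g⁻¹, ‹N.Normal›.conj_mem n hn g, rfl⟩)
  revert hx
  refine fun hx => Subgroup.closure_induction
    (fun y hy => hmap y hy)
    (by simpa using (WAB N t d h).one_mem)
    (fun a b _ _ ha hb => by
      have : g * (a * b) * g⁻¹ = (g * a * g⁻¹) * (g * b * g⁻¹) := by group
      rw [this]; exact mul_mem ha hb)
    (fun a _ ha => by
      have : g * a⁻¹ * g⁻¹ = (g * a * g⁻¹)⁻¹ := by group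
      rw [this]; exact inv_mem ha)
    hx

lemma WAB_ne_bot (hM : ∀ a b : ↥M, a * b = b * a) (hNM : N ≤ M)
    (hQ : ∃ d : ℕ, Nonempty ((G ⧸ M) ≃* Multiplicative (Fin d → ℤ)))
    (hcent : ∀ g : G, (∀ x ∈ N, g * x * g⁻¹ = x) → g ∈ M)
    {t : G} (ht : t ∉ M) {d h : ℕ} (hd : d ≠ 0) (hh : h ≠ 0) :
    WAB N t d h ≠ ⊥ := by
  intro hbot
  have hE1 : ∀ n ∈ N, ∀ r : ℤ, cmt (t ^ r) (n ^ d) = 1 := by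
    intro n hn r
    have := Subgroup.subset_closure
      (show _ ∈ WABgen N t d h from Or.inl ⟨n, hn, r, rfl⟩)
    rw [← WAB, hbot] at this
    simpa using this
  have hE2 : ∀ n ∈ N, cmt (t ^ (h : ℤ)) (cmt (t ^ (h : ℤ)) n) = 1 := by
    intro n hn
    have := Subgroup.subset_closure
      (show _ ∈ WABgen N t d h from Or.inr ⟨n, hn, rfl⟩)
    rw [← WAB, hbot] at this
    simpa using this
  -- conclude that t ^ (h * d) centralizes N
  have hcentral : ∀ n ∈ N, t ^ (h * d) * n * (t ^ (h * d))⁻¹ = n := by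
    intro n hn
    have hs := sigma_pow (t ^ h) n (by
      have := hE2 n hn
      rwa [zpow_natCast] at this) d
    have hc1 : (cmt (t ^ h) n) ^ d = 1 := by
      rw [← cmt_pow hM hNM (t ^ h) hn d]
      have := hE1 n hn (h : ℤ)
      rwa [zpow_natCast] at this
    rw [show ((cmt (t ^ h) n)⁻¹) ^ d = 1 by rw [inv_pow, hc1, inv_one]] at hs
    have hs' : (t ^ (h * d))⁻¹ * n * t ^ (h * d) = n := by
      rw [pow_mul, hs]; group
    conv_lhs => rw [← hs']
    group
  have htM : t ^ (h * d) ∈ M := hcent _ hcentral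
  have hq1 : ((t : G ⧸ M)) ^ (h * d) = 1 := by
    rw [← QuotientGroup.mk_pow, QuotientGroup.eq_one_iff]
    exact htM
  have := Qtf hQ _ _ (by positivity) hq1
  rw [QuotientGroup.eq_one_iff] at this
  exact ht this

end wab

section forcing

variable {M N : Subgroup G} [M.Normal] [N.Normal]
variable {X : Type*} [MulAction G X]

/-- Every subgroup of `↥N` is normal, since `N` is contained in the abelian group `M`. -/
lemma normalN (hM : ∀ a b : ↥M, a * b = b * a) (hNM : N ≤ M) (K : Subgroup ↥N) : K.Normal := by
  constructor
  intro a ha g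
  have h1 : g * a * g⁻¹ = a := by
    apply Subtype.ext
    push_cast
    rw [commN hM hNM g.2 a.2]
    group
  rwa [h1]

/-- The subgroup of "escape directions" associated to `t` and a point `z`. -/
def Bh (hM : ∀ a b : ↥M, a * b = b * a) (hNM : N ≤ M) (t : G) (z : X) : Subgroup ↥N where
  carrier := {δ : ↥N | ∀ r i : ℤ,
    t ^ i * cmt (t ^ r) (δ : G) * t ^ (-i) ∈ MulAction.stabilizer G z}
  one_mem' := by
    intro r i
    have : t ^ i * cmt (t ^ r) ((1 : ↥N) : G) * t ^ (-i) = 1 := by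
      rw [OneMemClass.coe_one, cmt_one]; group
    rw [this]; exact one_mem _
  mul_mem' := by
    intro a b ha hb r i
    have : t ^ i * cmt (t ^ r) ((a * b : ↥N) : G) * t ^ (-i)
        = (t ^ i * cmt (t ^ r) (a : G) * t ^ (-i)) * (t ^ i * cmt (t ^ r) (b : G) * t ^ (-i)) := by
      push_cast
      rw [cmt_mul hM hNM _ a.2 b.2]
      group
    rw [this]; exact mul_mem (ha r i) (hb r i)
  inv_mem' := by
    intro a ha r i
    have : t ^ i * cmt (t ^ r) ((a⁻¹ : ↥N) : G) * t ^ (-i)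
        = (t ^ i * cmt (t ^ r) (a : G) * t ^ (-i))⁻¹ := by
      push_cast
      rw [cmt_inv hM hNM _ a.2]
      group
    rw [this]; exact inv_mem (ha r i)

lemma mem_Bh_of_pairs (hM : ∀ a b : ↥M, a * b = b * a) (hNM : N ≤ M) {t : G} {z : X}
    {n n' : ↥N} (h1 : (n : G)⁻¹ * t * n ∈ MulAction.stabilizer G z)
    (h2 : (n' : G)⁻¹ * t * n' ∈ MulAction.stabilizer G z) :
    n' * n⁻¹ ∈ Bh hM hNM t z := by
  intro r i
  set S := MulAction.stabilizer G z
  have hw : ((n : G)⁻¹*t*n)^i * (((n : G)⁻¹*t*n)^r)⁻¹ * ((n' : G)⁻¹*t*n')^r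
      * (((n : G)⁻¹*t*n)^i)⁻¹ ∈ S :=
    mul_mem (mul_mem (mul_mem (zpow_mem h1 i) (inv_mem (zpow_mem h1 r)))
      (zpow_mem h2 r)) (inv_mem (zpow_mem h1 i))
  rw [key_identity] at hw
  set Y := t ^ i * cmt (t ^ r) ((n' : G) * (n : G)⁻¹) * t ^ (-i) with hYdef
  have hYN : Y ∈ N := by
    have h3 : cmt (t ^ r) ((n' : G) * (n : G)⁻¹) ∈ N :=
      cmt_mem (mul_mem n'.2 (inv_mem n.2))
    have h4 := ‹N.Normal›.conj_mem _ h3 (t ^ i)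
    rw [hYdef, show t ^ (-i) = (t ^ i)⁻¹ from zpow_neg t i]
    exact h4
  have heq : (n : G)⁻¹ * Y * n = Y := by
    calc (n : G)⁻¹ * Y * ↑n = (n : G)⁻¹ * (Y * ↑n) := by group
      _ = (n : G)⁻¹ * (↑n * Y) := by rw [commN hM hNM hYN n.2]
      _ = Y := by group
  rw [heq] at hw
  have hcoe : ((n' * n⁻¹ : ↥N) : G) = (n' : G) * (n : G)⁻¹ := by push_cast; rfl
  show t ^ i * cmt (t ^ r) ((n' * n⁻¹ : ↥N) : G) * t ^ (-i) ∈ S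
  rw [hcoe]
  exact hw

/-- Conjugation by `t⁻¹` as an automorphism of `↥N`. -/
def conjNE (t : G) : ↥N ≃* ↥N where
  toFun := fun δ => ⟨t⁻¹ * δ * t, by simpa using ‹N.Normal›.conj_mem _ δ.2 t⁻¹⟩
  invFun := fun δ => ⟨t * δ * t⁻¹, ‹N.Normal›.conj_mem _ δ.2 t⟩
  left_inv := fun δ => by ext; push_cast; group
  right_inv := fun δ => by ext; push_cast; group
  map_mul' := fun a b => by ext; push_cast; group

/-- The `t`-translate subgroup generated by `Bh`. -/
def PhiSub (hM : ∀ a b : ↥M, a * b = b * a) (hNM : N ≤ M) (t : G) (z : X) : Subgroup ↥N :=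
  Subgroup.closure {y : ↥N | ∃ (j : ℤ) (δ : ↥N), δ ∈ Bh hM hNM t z ∧
    (y : G) = t ^ j * δ * t ^ (-j)}

lemma Bh_le_Phi (hM : ∀ a b : ↥M, a * b = b * a) (hNM : N ≤ M) (t : G) (z : X) :
    Bh hM hNM t z ≤ PhiSub hM hNM t z := fun δ hδ =>
  Subgroup.subset_closure ⟨0, δ, hδ, by simp⟩

lemma Phi_push (hM : ∀ a b : ↥M, a * b = b * a) (hNM : N ≤ M) {t : G} {z : X} (h : ℕ)
    (y : ↥N) (hy : y ∈ PhiSub hM hNM t z) : ∀ i : ℤ,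
      t ^ i * cmt (t ^ (h : ℤ)) (y : G) * t ^ (-i) ∈ MulAction.stabilizer G z := by
  revert hy
  refine fun hy => Subgroup.closure_induction ?_ ?_ ?_ ?_ hy
  · rintro y ⟨j, δ, hδ, hye⟩ i
    have hconj : (y : G) = t ^ j * δ * (t ^ j)⁻¹ := by rw [hye, zpow_neg]
    have e1 : cmt (t ^ (h : ℤ)) (y : G)
        = t ^ j * cmt ((t ^ j)⁻¹ * t ^ (h : ℤ) * t ^ j) (δ : G) * (t ^ j)⁻¹ := by
      rw [hconj]; unfold cmt; group
    have e2 : (t ^ j)⁻¹ * t ^ (h : ℤ) * t ^ j = t ^ (h : ℤ) := by group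
    have e3 : t ^ i * cmt (t ^ (h : ℤ)) (y : G) * t ^ (-i)
        = t ^ (i + j) * cmt (t ^ (h : ℤ)) (δ : G) * t ^ (-(i + j)) := by
      rw [e1, e2]; group
    rw [e3]
    exact hδ (h : ℤ) (i + j)
  · intro i
    have : t ^ i * cmt (t ^ (h : ℤ)) ((1 : ↥N) : G) * t ^ (-i) = 1 := by
      rw [OneMemClass.coe_one, cmt_one]; group
    rw [this]; exact one_mem _
  · intro a b _ _ ha hb i
    have : t ^ i * cmt (t ^ (h : ℤ)) ((a * b : ↥N) : G) * t ^ (-i)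
        = (t ^ i * cmt (t ^ (h : ℤ)) (a : G) * t ^ (-i))
          * (t ^ i * cmt (t ^ (h : ℤ)) (b : G) * t ^ (-i)) := by
      push_cast
      rw [cmt_mul hM hNM _ a.2 b.2]
      group
    rw [this]; exact mul_mem (ha i) (hb i)
  · intro a _ ha i
    have : t ^ i * cmt (t ^ (h : ℤ)) ((a⁻¹ : ↥N) : G) * t ^ (-i)
        = (t ^ i * cmt (t ^ (h : ℤ)) (a : G) * t ^ (-i))⁻¹ := by
      push_cast
      rw [cmt_inv hM hNM _ a.2]
      group
    rw [this]; exact inv_mem (ha i)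

lemma cmt_mem_Phi (hM : ∀ a b : ↥M, a * b = b * a) (hNM : N ≤ M) {t : G} {z : X}
    (hfin : (Bh hM hNM t z).FiniteIndex) (k : ℕ) (hk : (Bh hM hNM t z).index ≤ k)
    (y : ↥N) :
    (⟨cmt (t ^ (k.factorial : ℤ)) (y : G), cmt_mem y.2⟩ : ↥N) ∈ PhiSub hM hNM t z := by
  classical
  haveI : (PhiSub hM hNM t z).Normal := normalN hM hNM _
  haveI := hfin
  haveI : (PhiSub hM hNM t z).FiniteIndex :=
    Subgroup.finiteIndex_of_le (Bh_le_Phi hM hNM t z)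
  letI : Fintype (↥N ⧸ PhiSub hM hNM t z) := Fintype.ofFinite _
  set c : ↥N ≃* ↥N := conjNE t with hc
  have hcapp : ∀ δ : ↥N, ((c δ : ↥N) : G) = t⁻¹ * δ * t := fun δ => rfl
  have hcsymm : ∀ δ : ↥N, ((c.symm δ : ↥N) : G) = t * δ * t⁻¹ := fun δ => rfl
  have hmapc : (PhiSub hM hNM t z).map c.toMonoidHom = PhiSub hM hNM t z := by
    apply le_antisymm
    · rw [PhiSub, MonoidHom.map_closure, Subgroup.closure_le]
      rintro x ⟨y, ⟨j, δ, hδ, hye⟩, rfl⟩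
      refine Subgroup.subset_closure ⟨j - 1, δ, hδ, ?_⟩
      rw [show ((c.toMonoidHom y : ↥N) : G) = t⁻¹ * ↑y * t from rfl, hye]
      have : t ^ (j - 1) = t⁻¹ * t ^ j := by group
      rw [this]; group
    · have h2 : (PhiSub hM hNM t z).map c.symm.toMonoidHom ≤ PhiSub hM hNM t z := by
        rw [PhiSub, MonoidHom.map_closure, Subgroup.closure_le]
        rintro x ⟨y, ⟨j, δ, hδ, hye⟩, rfl⟩
        refine Subgroup.subset_closure ⟨j + 1, δ, hδ, ?_⟩
        rw [show ((c.symm.toMonoidHom y : ↥N) : G) = t * ↑y * t⁻¹ from rfl, hye]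
        have : t ^ (j + 1) = t * t ^ j := by group
        rw [this]; group
      intro y hy
      exact ⟨c.symm y, h2 (Subgroup.mem_map_of_mem c.symm.toMonoidHom hy), by simp⟩
  set τ := QuotientGroup.congr (PhiSub hM hNM t z) (PhiSub hM hNM t z) c hmapc with hτ
  set σ : Equiv.Perm (↥N ⧸ PhiSub hM hNM t z) := τ.toEquiv with hσ
  have happly : ∀ y : ↥N, σ ((y : ↥N ⧸ PhiSub hM hNM t z)) = ((c y : ↥N ⧸ PhiSub hM hNM t z)) :=
    fun y => rfl
  have hcpowmem : ∀ (j : ℕ) (y : ↥N), (t ^ j)⁻¹ * (y : G) * t ^ j ∈ N := by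
    intro j y
    simpa using ‹N.Normal›.conj_mem _ y.2 (t ^ j)⁻¹
  have hiter : ∀ (j : ℕ) (y : ↥N),
      (σ ^ j) ((y : ↥N ⧸ PhiSub hM hNM t z))
        = ((⟨(t ^ j)⁻¹ * (y : G) * t ^ j, hcpowmem j y⟩ : ↥N) : ↥N ⧸ PhiSub hM hNM t z) := by
    intro j
    induction j with
    | zero => intro y; simp
    | succ j ih =>
        intro y
        rw [pow_succ', Equiv.Perm.mul_apply, ih y, happly]
        congr 1
        ext
        rw [hcapp]
        push_cast
        rw [pow_succ]
        group
  have horder : σ ^ k.factorial = 1 := by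
    rw [← orderOf_dvd_iff_pow_eq_one]
    have h1 : orderOf σ ∣ (Fintype.card (↥N ⧸ PhiSub hM hNM t z)).factorial := by
      have := orderOf_dvd_card (x := σ)
      rwa [Fintype.card_perm] at this
    refine h1.trans (Nat.factorial_dvd_factorial ?_)
    have h2 : Fintype.card (↥N ⧸ PhiSub hM hNM t z) = (PhiSub hM hNM t z).index := by
      rw [Subgroup.index_eq_card, Nat.card_eq_fintype_card]
    rw [h2]
    exact le_trans (Subgroup.index_antitone (Bh_le_Phi hM hNM t z)) hk
  have hfixed : (σ ^ k.factorial) ((y : ↥N ⧸ PhiSub hM hNM t z)) = ((y : ↥N ⧸ PhiSub hM hNM t z)) := by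
    rw [horder]; rfl
  rw [hiter k.factorial y] at hfixed
  have hmem := (QuotientGroup.eq (s := PhiSub hM hNM t z)).1 hfixed
  have heq : (⟨(t ^ k.factorial)⁻¹ * (y : G) * t ^ k.factorial, hcpowmem k.factorial y⟩ : ↥N)⁻¹ * y
      = (⟨cmt (t ^ (k.factorial : ℤ)) (y : G), cmt_mem y.2⟩ : ↥N) := by
    ext
    push_cast
    rw [zpow_natCast]
    unfold cmt
    group
  rwa [heq] at hmem

lemma forcing_lemma (hM : ∀ a b : ↥M, a * b = b * a) (hNM : N ≤ M)
    (z : X) (T₁ : Finset G)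
    (hcov : ∀ n : ↥N, ∃ t ∈ T₁, (n : G)⁻¹ * t * n ∈ MulAction.stabilizer G z) :
    ∃ t ∈ T₁, ∃ d : ℕ, d ≠ 0 ∧ d ≤ T₁.card ∧
      WAB N t d (T₁.card).factorial ≤ MulAction.stabilizer G z := by
  classical
  set S := MulAction.stabilizer G z with hS
  set P : G → Prop := fun t => ∃ n : ↥N, (n : G)⁻¹ * t * n ∈ S with hP
  set s : Finset G := T₁.filter P with hs
  set w : G → ↥N := fun t => if h : P t then h.choose else 1 with hwdef
  have hw : ∀ t, P t → ((w t : ↥N) : G)⁻¹ * t * (w t) ∈ S := by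
    intro t h
    rw [hwdef]
    simp only [dif_pos h]
    exact h.choose_spec
  have hcovers : ⋃ t ∈ s, (w t) • ((Bh hM hNM t z : Subgroup ↥N) : Set ↥N) = Set.univ := by
    rw [Set.eq_univ_iff_forall]
    intro n
    obtain ⟨t, ht, hfix⟩ := hcov n
    have hPt : P t := ⟨n, hfix⟩
    refine Set.mem_biUnion (Finset.mem_coe.2 (Finset.mem_filter.2 ⟨ht, hPt⟩)) ?_
    rw [Set.mem_smul_set_iff_inv_smul_mem]
    have hmem : n * (w t)⁻¹ ∈ Bh hM hNM t z := mem_Bh_of_pairs hM hNM (hw t hPt) hfix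
    have : (w t)⁻¹ • n = n * (w t)⁻¹ := by
      have hcomm : ∀ a b : ↥N, a * b = b * a := fun a b =>
        Subtype.ext (commN hM hNM a.2 b.2)
      rw [smul_eq_mul, hcomm]
    rw [this]
    exact hmem
  obtain ⟨t, hts, hfin, hle⟩ := Subgroup.exists_index_le_card_of_leftCoset_cover hcovers
  have htT : t ∈ T₁ := (Finset.mem_filter.1 hts).1
  refine ⟨t, htT, (Bh hM hNM t z).index, hfin.index_ne_zero,
    hle.trans (Finset.card_filter_le _ _), ?_⟩
  have hdk : (Bh hM hNM t z).index ≤ T₁.card := hle.trans (Finset.card_filter_le _ _)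
  rw [WAB, Subgroup.closure_le]
  rintro x (⟨n, hn, r, rfl⟩ | ⟨n, hn, rfl⟩)
  · -- A-type generator
    haveI : (Bh hM hNM t z).Normal := normalN hM hNM _
    have hmem : (⟨n, hn⟩ : ↥N) ^ (Bh hM hNM t z).index ∈ Bh hM hNM t z :=
      Subgroup.pow_index_mem _ _
    have hprop := hmem r 0
    have hcoe : (((⟨n, hn⟩ : ↥N) ^ (Bh hM hNM t z).index : ↥N) : G)
        = n ^ (Bh hM hNM t z).index := by push_cast; rfl
    rw [hcoe] at hprop
    simpa [hS] using hprop
  · -- B-type generator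
    have hPhi := cmt_mem_Phi hM hNM hfin (T₁.card) hdk ⟨n, hn⟩
    have hprop := Phi_push hM hNM (T₁.card).factorial _ hPhi 0
    simpa [hS] using hprop

end forcing

section core

variable {M N : Subgroup G} [M.Normal] [N.Normal]

lemma normal_inf' {H K : Subgroup G} (h1 : H.Normal) (h2 : K.Normal) : (H ⊓ K).Normal := by
  constructor
  intro x hx g
  rw [Subgroup.mem_inf] at hx ⊢
  exact ⟨h1.conj_mem _ hx.1 g, h2.conj_mem _ hx.2 g⟩

lemma family_inf_ne_bot
    (huniform : ∀ N₁ N₂ : Subgroup G, N₁.Normal → N₂.Normal → N₁ ≤ N → N₂ ≤ N →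
      N₁ ≠ ⊥ → N₂ ≠ ⊥ → N₁ ⊓ N₂ ≠ ⊥)
    {ι : Type*} [DecidableEq ι] (s : Finset ι) (f : ι → Subgroup G)
    (hf : ∀ i ∈ s, (f i).Normal ∧ f i ≤ N ∧ f i ≠ ⊥)
    (base : Subgroup G) (hb1 : base.Normal) (hb2 : base ≤ N) (hb3 : base ≠ ⊥) :
    (base ⊓ ⨅ i ∈ s, f i).Normal ∧ (base ⊓ ⨅ i ∈ s, f i) ≤ N
      ∧ (base ⊓ ⨅ i ∈ s, f i) ≠ ⊥ := by
  induction s using Finset.induction_on with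
  | empty => simpa using ⟨hb1, hb2, hb3⟩
  | @insert a s ha ih =>
      rw [Finset.iInf_insert]
      obtain ⟨h1, h2, h3⟩ := ih (fun i hi => hf i (Finset.mem_insert_of_mem hi))
      have hfa := hf a (Finset.mem_insert_self a s)
      have heq : base ⊓ (f a ⊓ ⨅ i ∈ s, f i) = (base ⊓ ⨅ i ∈ s, f i) ⊓ f a := by
        rw [← inf_assoc, inf_comm base (f a), inf_assoc, inf_comm (f a)]
      rw [heq]
      exact ⟨normal_inf' h1 hfa.1, le_trans inf_le_left h2,
        huniform _ _ h1 hfa.1 h2 hfa.2.1 h3 hfa.2.2⟩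

lemma closure_normal_of_conj (s : Set G) (hs : ∀ x ∈ s, ∀ g : G, g * x * g⁻¹ ∈ s) :
    (Subgroup.closure s).Normal := by
  constructor
  intro x hx g
  refine Subgroup.closure_induction
    (fun y hy => Subgroup.subset_closure (hs y hy g))
    (by simpa using (Subgroup.closure s).one_mem)
    (fun a b _ _ ha hb => by
      have : g * (a * b) * g⁻¹ = (g * a * g⁻¹) * (g * b * g⁻¹) := by group
      rw [this]; exact mul_mem ha hb)
    (fun a _ ha => by
      have : g * a⁻¹ * g⁻¹ = (g * a * g⁻¹)⁻¹ := by group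
      rw [this]; exact inv_mem ha)
    hx

lemma core_lemma (hM : ∀ a b : ↥M, a * b = b * a) (hNM : N ≤ M)
    (hQ : ∃ d : ℕ, Nonempty ((G ⧸ M) ≃* Multiplicative (Fin d → ℤ)))
    (hcent : ∀ g : G, (∀ x ∈ N, g * x * g⁻¹ = x) → g ∈ M)
    (huniform : ∀ N₁ N₂ : Subgroup G, N₁.Normal → N₂.Normal → N₁ ≤ N → N₂ ≤ N →
      N₁ ≠ ⊥ → N₂ ≠ ⊥ → N₁ ⊓ N₂ ≠ ⊥)
    (X : Type*) [MulAction G X] [FaithfulSMul G X]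
    (T₁ : Finset G) (hT₁ : ∀ t ∈ T₁, t ∉ M)
    (w₀ : G) (hw₀N : w₀ ∈ N) (hw₀ : w₀ ≠ 1) :
    ∃ x : X, (∀ t ∈ T₁, ¬ t • x = x) ∧ ¬ w₀ • x = x := by
  classical
  by_contra hcon
  push_neg at hcon
  set k := T₁.card with hk
  set hfac := k.factorial with hfacdef
  -- the candidate family
  set s' : Finset (G × ℕ) := T₁ ×ˢ Finset.Icc 1 k with hs'
  set f : G × ℕ → Subgroup G := fun p => WAB N p.1 p.2 hfac with hf
  have hfprop : ∀ p ∈ s', (f p).Normal ∧ f p ≤ N ∧ f p ≠ ⊥ := by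
    rintro ⟨t, d⟩ hp
    rw [Finset.mem_product] at hp
    have htM : t ∉ M := hT₁ t hp.1
    have hd : d ≠ 0 := by
      have := (Finset.mem_Icc.1 hp.2).1; omega
    exact ⟨WAB_normal hM hNM hQ t d hfac,
      WAB_le t d hfac,
      WAB_ne_bot hM hNM hQ hcent htM hd (Nat.factorial_ne_zero k)⟩
  -- the normal closure of w₀
  set ncl : Subgroup G := Subgroup.closure {x | ∃ g : G, x = g * w₀ * g⁻¹} with hncl
  have hncl_normal : ncl.Normal := by
    apply closure_normal_of_conj
    rintro x ⟨g0, rfl⟩ g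
    exact ⟨g * g0, by group⟩
  have hncl_le : ncl ≤ N := by
    rw [hncl, Subgroup.closure_le]
    rintro x ⟨g0, rfl⟩
    exact ‹N.Normal›.conj_mem _ hw₀N g0
  have hncl_ne : ncl ≠ ⊥ := by
    intro hbot
    have : w₀ ∈ ncl := Subgroup.subset_closure ⟨1, by group⟩
    rw [hbot, Subgroup.mem_bot] at this
    exact hw₀ this
  obtain ⟨hW1, hW2, hW3⟩ :=
    family_inf_ne_bot huniform s' f hfprop ncl hncl_normal hncl_le hncl_ne
  set Wstar : Subgroup G := ncl ⊓ ⨅ p ∈ s', f p with hWstar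
  -- the invariant set Y
  set Y : Set X := {x | ∃ p ∈ s', f p ≤ MulAction.stabilizer G x} with hY
  have hYinv : ∀ (g : G) (x : X), x ∈ Y → g • x ∈ Y := by
    rintro g x ⟨p, hp, hle⟩
    refine ⟨p, hp, ?_⟩
    intro w hw
    rw [MulAction.mem_stabilizer_iff]
    have h1 : g⁻¹ * w * g ∈ f p := by
      have := (hfprop p hp).1.conj_mem w hw g⁻¹
      simpa using this
    have h2 : (g⁻¹ * w * g) • x = x := hle h1
    calc w • g • x = (g * (g⁻¹ * w * g)) • (g⁻¹ • (g • x)) := by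
          rw [inv_smul_smul, ← mul_smul]; congr 1; group
      _ = g • ((g⁻¹ * w * g) • (g⁻¹ • (g • x))) := by rw [mul_smul]
      _ = g • x := by rw [inv_smul_smul, h2]
  have hout : ∀ x : X, x ∉ Y → w₀ • x = x := by
    intro x hxY
    by_contra hw0x
    -- every point of the N-orbit of x is fixed by some element of T₁
    have hcov : ∀ n : ↥N, ∃ t ∈ T₁, (n : G)⁻¹ * t * n ∈ MulAction.stabilizer G x := by
      intro n
      by_cases hex : ∃ t ∈ T₁, t • ((n : G) • x) = (n : G) • x
      · obtain ⟨t, ht, hfix⟩ := hex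
        refine ⟨t, ht, ?_⟩
        rw [MulAction.mem_stabilizer_iff, mul_smul, mul_smul, hfix, inv_smul_smul]
      · exfalso
        push_neg at hex
        have := hcon ((n : G) • x) (fun t ht => hex t ht)
        -- w₀ fixes n • x, hence fixes x
        have hcomm : w₀ * n = n * w₀ := commN hM hNM hw₀N n.2
        rw [← mul_smul, hcomm, mul_smul] at this
        exact hw0x (smul_left_cancel (n : G) this)
    obtain ⟨t, ht, d, hd0, hdk, hle⟩ := forcing_lemma hM hNM x T₁ hcov
    exact hxY ⟨(t, d), by
      rw [hs', Finset.mem_product]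
      exact ⟨ht, Finset.mem_Icc.2 ⟨Nat.one_le_iff_ne_zero.2 hd0, hdk⟩⟩, hle⟩
  -- Wstar fixes every point
  have hfix : ∀ (w : G), w ∈ Wstar → ∀ x : X, w • x = x := by
    intro w hw x
    by_cases hxY : x ∈ Y
    · obtain ⟨p, hp, hle⟩ := hxY
      have : Wstar ≤ f p := le_trans inf_le_right (biInf_le f hp)
      exact hle (this hw)
    · -- x is outside the invariant set Y, so all conjugates of w₀ fix x
      have hnclfix : ∀ v ∈ ncl, v • x = x := by
        intro v hv
        have : ncl ≤ MulAction.stabilizer G x := by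
          rw [hncl, Subgroup.closure_le]
          rintro u ⟨g0, rfl⟩
          rw [SetLike.mem_coe, MulAction.mem_stabilizer_iff]
          have hgx : g0⁻¹ • x ∉ Y := by
            intro hmem
            have := hYinv g0 _ hmem
            rw [smul_inv_smul] at this
            exact hxY this
          have hfix0 : w₀ • (g0⁻¹ • x) = g0⁻¹ • x := hout _ hgx
          calc (g0 * w₀ * g0⁻¹) • x = g0 • w₀ • g0⁻¹ • x := by
                rw [← mul_smul, ← mul_smul]
            _ = g0 • g0⁻¹ • x := by rw [hfix0]
            _ = x := by rw [smul_inv_smul]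
        exact this hv
      exact hnclfix w ((inf_le_left : Wstar ≤ ncl) hw)
  -- faithfulness gives Wstar = ⊥
  have : Wstar = ⊥ := by
    rw [Subgroup.eq_bot_iff_forall]
    intro w hw
    apply eq_of_smul_eq_smul (α := X)
    intro x
    rw [one_smul]
    exact hfix w hw x
  exact hW3 this

end core

end S19



/-- A subset `L` of a group `G` is non-foldable if for every faithful nonempty `G`-set `X` and
every finite subset `s ⊆ L` there exists `x ∈ X` on which the orbital map is injective. -/
def NonFoldableSubset {G : Type*} [Group G] (L : Set G) : Prop :=
  ∀ (X : Type*) [MulAction G X] [Nonempty X] [FaithfulSMul G X],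
    ∀ s : Set G, s ⊆ L → s.Finite → ∃ x : X, Set.InjOn (fun g : G => g • x) s

/-- Let `G` be a finitely generated group with an abelian normal subgroup
`M` such that `Q = G/M` is finitely generated free abelian, and let `N ≤ M` be a subgroup
normal in `G` that is uniform (any two nontrivial `G`-normal subgroups of `N` intersect
nontrivially) and has trivial centralizer (any `g` centralizing `N` lies in `M`). If
`L ⊆ G` is a lift of `Q` (the quotient map restricted to `L` is a bijection onto `Q`), then:
(i) `L` is a non-foldable subset of `G`; and (ii) if moreover `N` is torsion-free, then for
every nontrivial `m ∈ N` the set `L·⟨m⟩` is a non-foldable subset of `G`. -/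
theorem lift_nonfoldable_of_uniform_module (G : Type*) [Group G] [Group.FG G]
    (M : Subgroup G) [M.Normal] (hM : ∀ a b : ↥M, a * b = b * a)
    (hQ : ∃ d : ℕ, Nonempty ((G ⧸ M) ≃* Multiplicative (Fin d → ℤ)))
    (N : Subgroup G) [N.Normal] (hNM : N ≤ M)
    (huniform : ∀ N₁ N₂ : Subgroup G, N₁.Normal → N₂.Normal → N₁ ≤ N → N₂ ≤ N →
      N₁ ≠ ⊥ → N₂ ≠ ⊥ → N₁ ⊓ N₂ ≠ ⊥)
    (hcent : ∀ g : G, (∀ x ∈ N, g * x * g⁻¹ = x) → g ∈ M)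
    (L : Set G)
    (hlift : Set.BijOn (QuotientGroup.mk : G → G ⧸ M) L Set.univ) :
    NonFoldableSubset L ∧
      ((∀ g : ↥N, g ≠ 1 → ¬IsOfFinOrder g) →
        ∀ m ∈ N, m ≠ 1 →
          NonFoldableSubset {g : G | ∃ l ∈ L, ∃ k : ℤ, g = l * m ^ k}) := by
  classical
  have hNbot : ∀ t : G, t ∉ M → N ≠ ⊥ := by
    intro t ht hNb
    apply ht
    apply hcent
    intro x hx
    rw [hNb, Subgroup.mem_bot] at hx
    rw [hx]; group
  have hWit : N ≠ ⊥ → ∃ w : G, w ∈ N ∧ w ≠ 1 := by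
    intro hne
    by_contra h
    push_neg at h
    apply hne
    rw [Subgroup.eq_bot_iff_forall]
    intro w hw
    exact h w hw
  constructor
  · -- part (i)
    intro X _ _ _ s hsL hsfin
    by_cases hss : ∀ a ∈ s, ∀ b ∈ s, a = b
    · obtain ⟨x⟩ := ‹Nonempty X›
      exact ⟨x, fun a ha b hb _ => hss a ha b hb⟩
    · push_neg at hss
      obtain ⟨a0, ha0, b0, hb0, hab0⟩ := hss
      have hdiffM : ∀ a ∈ s, ∀ b ∈ s, a ≠ b → b⁻¹ * a ∉ M := by
        intro a ha b hb hab hmem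
        apply hab
        exact (hlift.2.1 (hsL hb) (hsL ha) (QuotientGroup.eq.2 hmem)).symm
      obtain ⟨w₀, hw₀N, hw₀⟩ := hWit (hNbot _ (hdiffM a0 ha0 b0 hb0 hab0))
      set sfin := hsfin.toFinset with hsfdef
      set T₁ : Finset G :=
        ((sfin ×ˢ sfin).filter fun p => p.1 ≠ p.2).image fun p => p.2⁻¹ * p.1 with hT₁def
      have hT₁ : ∀ t ∈ T₁, t ∉ M := by
        intro t ht
        rw [hT₁def, Finset.mem_image] at ht
        obtain ⟨⟨a, b⟩, hp, rfl⟩ := ht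
        rw [Finset.mem_filter, Finset.mem_product] at hp
        exact hdiffM _ (hsfin.mem_toFinset.1 hp.1.1) _ (hsfin.mem_toFinset.1 hp.1.2) hp.2
      obtain ⟨x, hx1, hx2⟩ :=
        S19.core_lemma hM hNM hQ hcent huniform X T₁ hT₁ w₀ hw₀N hw₀
      refine ⟨x, ?_⟩
      intro a ha b hb heq
      by_contra hab
      have hmemT : b⁻¹ * a ∈ T₁ := by
        rw [hT₁def, Finset.mem_image]
        exact ⟨(a, b), Finset.mem_filter.2 ⟨Finset.mem_product.2
          ⟨hsfin.mem_toFinset.2 ha, hsfin.mem_toFinset.2 hb⟩, hab⟩, rfl⟩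
      apply hx1 _ hmemT
      have heq' : a • x = b • x := heq
      rw [mul_smul, heq', inv_smul_smul]
  · -- part (ii)
    intro htf m hmN hm1 X _ _ _ s hsS hsfin
    have hrep : ∀ a ∈ s, ∃ p : G × ℤ, p.1 ∈ L ∧ a = p.1 * m ^ p.2 := by
      intro a ha
      obtain ⟨l, hl, kk, hk⟩ := hsS ha
      exact ⟨(l, kk), hl, hk⟩
    set rep : G → G × ℤ := fun a =>
      if h : ∃ p : G × ℤ, p.1 ∈ L ∧ a = p.1 * m ^ p.2 then h.choose else (1, 0) with hrepdef
    have hrep1 : ∀ a ∈ s, (rep a).1 ∈ L ∧ a = (rep a).1 * m ^ (rep a).2 := by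
      intro a ha
      have h := hrep a ha
      rw [hrepdef]
      simp only [dif_pos h]
      exact h.choose_spec
    set sfin := hsfin.toFinset with hsfdef
    set pairs := (sfin ×ˢ sfin).filter (fun p => (rep p.1).2 ≠ (rep p.2).2) with hpairsdef
    set Lc : ℕ := pairs.lcm fun p => ((rep p.1).2 - (rep p.2).2).natAbs with hLcdef
    have hLc0 : Lc ≠ 0 := by
      rw [hLcdef]
      intro h0
      rw [Finset.lcm_eq_zero_iff] at h0
      obtain ⟨p, hp, h0'⟩ := h0
      rw [hpairsdef, Finset.mem_filter] at hp
      exact hp.2 (sub_eq_zero.1 (Int.natAbs_eq_zero.1 (by simpa using h0')))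
    have hmord : ∀ c : ℕ, c ≠ 0 → m ^ c ≠ 1 := by
      intro c hc h1
      have hcoe : (⟨m, hmN⟩ : ↥N) ^ c = 1 := by
        ext; push_cast; exact h1
      have hford : IsOfFinOrder (⟨m, hmN⟩ : ↥N) :=
        isOfFinOrder_iff_pow_eq_one.2 ⟨c, Nat.pos_of_ne_zero hc, hcoe⟩
      refine htf ⟨m, hmN⟩ (fun h => hm1 ?_) hford
      simpa using congrArg Subtype.val h
    set w₀ : G := m ^ Lc with hw₀def
    have hw₀N : w₀ ∈ N := pow_mem hmN Lc
    have hw₀ : w₀ ≠ 1 := hmord Lc hLc0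
    set T₁ : Finset G :=
      ((sfin ×ˢ sfin).filter fun p => p.2⁻¹ * p.1 ∉ M).image fun p => p.2⁻¹ * p.1 with hT₁def
    have hT₁ : ∀ t ∈ T₁, t ∉ M := by
      intro t ht
      rw [hT₁def, Finset.mem_image] at ht
      obtain ⟨⟨a, b⟩, hp, rfl⟩ := ht
      exact (Finset.mem_filter.1 hp).2
    obtain ⟨x, hx1, hx2⟩ :=
      S19.core_lemma hM hNM hQ hcent huniform X T₁ hT₁ w₀ hw₀N hw₀
    refine ⟨x, ?_⟩
    intro a ha b hb heq
    by_contra hab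
    have heq' : a • x = b • x := heq
    have hstab : (b⁻¹ * a) • x = x := by rw [mul_smul, heq', inv_smul_smul]
    by_cases hMmem : b⁻¹ * a ∈ M
    · -- same L-component, difference is a power of m
      obtain ⟨hla, hae⟩ := hrep1 a ha
      obtain ⟨hlb, hbe⟩ := hrep1 b hb
      have hmk : ∀ c ∈ s, ((rep c).1 : G ⧸ M) = (c : G ⧸ M) := by
        intro c hc
        obtain ⟨_, hce⟩ := hrep1 c hc
        rw [QuotientGroup.eq]
        have h2 : ((rep c).1)⁻¹ * ((rep c).1 * m ^ (rep c).2) = m ^ (rep c).2 := by group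
        rw [← hce] at h2
        rw [h2]
        exact zpow_mem (hNM hmN) _
      have hll : (rep a).1 = (rep b).1 := by
        apply hlift.2.1 hla hlb
        rw [hmk a ha, hmk b hb]
        exact (QuotientGroup.eq.2 hMmem).symm
      have hae' : a = (rep b).1 * m ^ (rep a).2 := by
        rw [← hll]; exact hae
      have hdiffeq : b⁻¹ * a = m ^ ((rep a).2 - (rep b).2) := by
        have h2 : ((rep b).1 * m ^ (rep b).2)⁻¹ * ((rep b).1 * m ^ (rep a).2)
            = m ^ ((rep a).2 - (rep b).2) := by group
        rw [← hae', ← hbe] at h2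
        exact h2
      have hkk : (rep a).2 ≠ (rep b).2 := by
        intro he
        apply hab
        rw [hae', he]
        exact hbe.symm
      have hpairs : (a, b) ∈ pairs := by
        rw [hpairsdef, Finset.mem_filter, Finset.mem_product]
        exact ⟨⟨hsfin.mem_toFinset.2 ha, hsfin.mem_toFinset.2 hb⟩, hkk⟩
      have hdvd : ((rep a).2 - (rep b).2).natAbs ∣ Lc := Finset.dvd_lcm hpairs
      have hjstab : m ^ ((rep a).2 - (rep b).2) ∈ MulAction.stabilizer G x := by
        rw [MulAction.mem_stabilizer_iff, ← hdiffeq]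
        exact hstab
      obtain ⟨c, hc⟩ : ((rep a).2 - (rep b).2) ∣ (Lc : ℤ) := by
        have h1 : (((((rep a).2 - (rep b).2)).natAbs : ℤ)) ∣ (Lc : ℤ) :=
          Int.natCast_dvd_natCast.2 hdvd
        rwa [Int.natAbs_dvd] at h1
      apply hx2
      have hw0stab : w₀ ∈ MulAction.stabilizer G x := by
        have h2 : (m ^ ((rep a).2 - (rep b).2)) ^ c ∈ MulAction.stabilizer G x :=
          zpow_mem hjstab c
        rw [← zpow_mul, ← hc, zpow_natCast] at h2
        exact h2
      exact hw0stab
    · have hmemT : b⁻¹ * a ∈ T₁ := by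
        rw [hT₁def, Finset.mem_image]
        exact ⟨(a, b), Finset.mem_filter.2 ⟨Finset.mem_product.2
          ⟨hsfin.mem_toFinset.2 ha, hsfin.mem_toFinset.2 hb⟩, hMmem⟩, rfl⟩
      exact hx1 _ hmemT hstab
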